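/- For every n and every i with 0 < i < |Wₙ|, letting α denote the subword of W of length |Wₙ| beginning at position i, one has d₀(Wₙ, α) > 1/6 and d(Wₙ, α) > 2/9. -/

import Mathlib

open Filter

/-- The Chacón words: `W₀ = 0`, `W_{n+1} = Wₙ Wₙ 1 Wₙ`. -/
def chaconWord : ℕ → List (Fin 2)
  | 0 => [0]
  | n + 1 => chaconWord n ++ chaconWord n ++ [1] ++ chaconWord n

namespace ChaconAux

abbrev cH (n : ℕ) : ℕ := (chaconWord n).length

lemma cA_succ (n : ℕ) :
    chaconWord (n+1) = chaconWord n ++ (chaconWord n ++ ((1:Fin 2) :: chaconWord n)) := by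
  simp [chaconWord]

lemma cH_succ (n : ℕ) : cH (n+1) = 3 * cH n + 1 := by
  simp [cH, cA_succ]; omega

lemma cH_pos (n : ℕ) : 0 < cH n := by
  induction n with
  | zero => simp [cH, chaconWord]
  | succ n ih => rw [cH_succ]; omega

lemma cH_zero : cH 0 = 1 := by simp [cH, chaconWord]

/-- number of 0→1 errors comparing `chaconWord n` to the stream `y`. -/
def cntE (n : ℕ) (y : List (Fin 2)) : ℕ :=
  ∑ k ∈ Finset.range (cH n),
    (if (chaconWord n).getD k 0 = 0 ∧ y.getD k 0 = 1 then 1 else 0)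

/-- number of mismatches comparing `chaconWord n` to the stream `y`. -/
def cntD (n : ℕ) (y : List (Fin 2)) : ℕ :=
  ∑ k ∈ Finset.range (cH n),
    (if (chaconWord n).getD k 0 ≠ y.getD k 0 then 1 else 0)

lemma len_eq (n : ℕ) : (chaconWord n).length = cH n := rfl

lemma getD_dropL (y : List (Fin 2)) (m k : ℕ) :
    (y.drop m).getD k 0 = y.getD (m + k) 0 := by
  rw [List.getD_eq_getElem?_getD, List.getD_eq_getElem?_getD, List.getElem?_drop]

lemma gA1 {n k : ℕ} (hk : k < cH n) :
    (chaconWord (n+1)).getD k 0 = (chaconWord n).getD k 0 := by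
  rw [cA_succ]
  exact List.getD_append _ _ _ _ (by simpa using hk)

lemma gA2 {n k : ℕ} (hk : k < cH n) :
    (chaconWord (n+1)).getD (cH n + k) 0 = (chaconWord n).getD k 0 := by
  rw [cA_succ, List.getD_append_right _ _ _ _ (by simp), Nat.add_sub_cancel_left]
  exact List.getD_append _ _ _ _ (by simpa using hk)

lemma gAs (n : ℕ) : (chaconWord (n+1)).getD (2 * cH n) 0 = 1 := by
  rw [cA_succ]
  rw [List.getD_append_right _ _ _ _ (by rw [len_eq]; omega)]
  rw [show 2 * cH n - (chaconWord n).length = cH n + 0 from by rw [len_eq]; omega]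
  rw [List.getD_append_right _ _ _ _ (by simp)]
  simp

lemma gA3 {n k : ℕ} (hk : k < cH n) :
    (chaconWord (n+1)).getD (2 * cH n + 1 + k) 0 = (chaconWord n).getD k 0 := by
  rw [cA_succ]
  rw [List.getD_append_right _ _ _ _ (by rw [len_eq]; omega)]
  rw [show 2 * cH n + 1 + k - (chaconWord n).length = cH n + (1 + k) from by rw [len_eq]; omega]
  rw [List.getD_append_right _ _ _ _ (by simp)]
  rw [Nat.add_sub_cancel_left, Nat.add_comm 1 k]
  exact List.getD_cons_succ

lemma A_first (n : ℕ) : (chaconWord n).getD 0 0 = 0 := by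
  induction n with
  | zero => simp [chaconWord]
  | succ n ih => rw [gA1 (cH_pos n)]; exact ih

lemma A_last (n : ℕ) : (chaconWord n).getD (cH n - 1) 0 = 0 := by
  induction n with
  | zero => simp [chaconWord, cH]
  | succ n ih =>
      have h1 := cH_pos n
      rw [show cH (n+1) - 1 = 2 * cH n + 1 + (cH n - 1) by rw [cH_succ]; omega]
      rw [gA3 (by omega)]
      exact ih

lemma A_getD_len (n : ℕ) {k : ℕ} (hk : cH n ≤ k) : (chaconWord n).getD k 0 = 0 :=
  List.getD_eq_default _ _ hk

/-- generic decomposition of a sum over `range (cH (n+1))`. -/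
lemma sum_split (n : ℕ) (f : ℕ → ℕ) :
    ∑ k ∈ Finset.range (cH (n+1)), f k
      = (∑ k ∈ Finset.range (cH n), f k)
        + ((∑ k ∈ Finset.range (cH n), f (cH n + k))
        + (f (2 * cH n) + ∑ k ∈ Finset.range (cH n), f (2 * cH n + 1 + k))) := by
  rw [show cH (n+1) = cH n + (cH n + (1 + cH n)) by rw [cH_succ]; omega]
  rw [Finset.sum_range_add, Finset.sum_range_add, Finset.sum_range_add,
    Finset.sum_range_one]
  have h1 : ∀ k ∈ Finset.range (cH n), f (cH n + (cH n + (1+k))) = f (2*cH n + 1 + k) :=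
    fun k _ => by congr 1; omega
  rw [Finset.sum_congr rfl h1, show cH n + (cH n + 0) = 2 * cH n from by omega]

lemma cntE_le3 (n : ℕ) (y : List (Fin 2)) :
    cntE n y + cntE n (y.drop (cH n)) + cntE n (y.drop (2 * cH n + 1)) ≤ cntE (n+1) y := by
  unfold cntE
  rw [sum_split n]
  have e1 : ∀ k ∈ Finset.range (cH n),
      (if (chaconWord n).getD k 0 = 0 ∧ (y.drop (cH n)).getD k 0 = 1 then 1 else 0)
      = (if (chaconWord (n+1)).getD (cH n + k) 0 = 0 ∧ y.getD (cH n + k) 0 = 1 then 1 else 0) := by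
    intro k hk; rw [getD_dropL, gA2 (Finset.mem_range.mp hk)]
  have e2 : ∀ k ∈ Finset.range (cH n),
      (if (chaconWord n).getD k 0 = 0 ∧ (y.drop (2*cH n+1)).getD k 0 = 1 then 1 else 0)
      = (if (chaconWord (n+1)).getD (2*cH n+1 + k) 0 = 0 ∧ y.getD (2*cH n+1+k) 0 = 1 then 1 else 0) := by
    intro k hk; rw [getD_dropL, gA3 (Finset.mem_range.mp hk)]
  have e0 : ∀ k ∈ Finset.range (cH n),
      (if (chaconWord n).getD k 0 = 0 ∧ y.getD k 0 = 1 then 1 else 0)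
      = (if (chaconWord (n+1)).getD k 0 = 0 ∧ y.getD k 0 = 1 then 1 else 0) := by
    intro k hk; rw [gA1 (Finset.mem_range.mp hk)]
  rw [Finset.sum_congr rfl e0, Finset.sum_congr rfl e1, Finset.sum_congr rfl e2]
  omega

lemma cntD_le3 (n : ℕ) (y : List (Fin 2)) :
    cntD n y + cntD n (y.drop (cH n)) + cntD n (y.drop (2 * cH n + 1)) ≤ cntD (n+1) y := by
  unfold cntD
  rw [sum_split n]
  have e1 : ∀ k ∈ Finset.range (cH n),
      (if (chaconWord n).getD k 0 ≠ (y.drop (cH n)).getD k 0 then 1 else 0)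
      = (if (chaconWord (n+1)).getD (cH n + k) 0 ≠ y.getD (cH n + k) 0 then 1 else 0) := by
    intro k hk; rw [getD_dropL, gA2 (Finset.mem_range.mp hk)]
  have e2 : ∀ k ∈ Finset.range (cH n),
      (if (chaconWord n).getD k 0 ≠ (y.drop (2*cH n+1)).getD k 0 then 1 else 0)
      = (if (chaconWord (n+1)).getD (2*cH n+1 + k) 0 ≠ y.getD (2*cH n+1+k) 0 then 1 else 0) := by
    intro k hk; rw [getD_dropL, gA3 (Finset.mem_range.mp hk)]
  have e0 : ∀ k ∈ Finset.range (cH n),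
      (if (chaconWord n).getD k 0 ≠ y.getD k 0 then 1 else 0)
      = (if (chaconWord (n+1)).getD k 0 ≠ y.getD k 0 then 1 else 0) := by
    intro k hk; rw [gA1 (Finset.mem_range.mp hk)]
  rw [Finset.sum_congr rfl e0, Finset.sum_congr rfl e1, Finset.sum_congr rfl e2]
  omega



/-- weighted count of adjacent pairs in `chaconWord n`. -/
def pairSum (n : ℕ) (w : Fin 2 → Fin 2 → ℕ) : ℕ :=
  ∑ k ∈ Finset.range (cH n),
    w ((chaconWord n).getD k 0) ((chaconWord n).getD (k+1) 0)

lemma pairSum_step (n : ℕ) (w : Fin 2 → Fin 2 → ℕ) (h00 : w 0 0 = 0) :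
    3 * pairSum (n+1) w + w 0 1 + w 1 0 ≤ pairSum (n+2) w := by
  have hpos := cH_pos (n+1)
  obtain ⟨m, hm⟩ : ∃ m, cH (n+1) = m + 1 := ⟨cH (n+1) - 1, by omega⟩
  have hmlt : m < cH (n+1) := by omega
  have hlast : (chaconWord (n+1)).getD m 0 = 0 := by
    have := A_last (n+1); rwa [show cH (n+1) - 1 = m from by omega] at this
  have hsplit := sum_split (n+1)
    (fun k => w ((chaconWord (n+2)).getD k 0) ((chaconWord (n+2)).getD (k+1) 0))
  rw [show (n:ℕ)+1+1 = n+2 from rfl] at hsplit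
  have hrw : pairSum (n+2) w
      = ∑ k ∈ Finset.range (cH (n+2)),
        (fun k => w ((chaconWord (n+2)).getD k 0) ((chaconWord (n+2)).getD (k+1) 0)) k := rfl
  rw [hrw, hsplit]
  -- last term of pairSum (n+1)
  have hps : pairSum (n+1) w
      = (∑ k ∈ Finset.range m,
          w ((chaconWord (n+1)).getD k 0) ((chaconWord (n+1)).getD (k+1) 0)) + 0 := by
    rw [pairSum, hm, Finset.sum_range_succ]
    congr 1
    rw [hlast, A_getD_len (n+1) (by omega), h00]
  -- copy 1
  have c1 : (∑ k ∈ Finset.range (cH (n+1)),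
      w ((chaconWord (n+2)).getD k 0) ((chaconWord (n+2)).getD (k+1) 0))
      = pairSum (n+1) w := by
    have hsr : (∑ k ∈ Finset.range (cH (n+1)),
        w ((chaconWord (n+2)).getD k 0) ((chaconWord (n+2)).getD (k+1) 0))
        = (∑ k ∈ Finset.range m,
            w ((chaconWord (n+2)).getD k 0) ((chaconWord (n+2)).getD (k+1) 0))
          + w ((chaconWord (n+2)).getD m 0) ((chaconWord (n+2)).getD (m+1) 0) := by
      rw [hm]; exact Finset.sum_range_succ _ m
    rw [hsr, hps]
    congr 1
    · apply Finset.sum_congr rfl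
      intro k hk
      have hk' := Finset.mem_range.mp hk
      rw [gA1 (n := n+1) (by omega), gA1 (n := n+1) (by omega)]
    · rw [gA1 (n := n+1) hmlt, hlast, show m + 1 = cH (n+1) + 0 from by omega,
        gA2 (n := n+1) (cH_pos (n+1)), A_first]
      exact h00
  -- copy 2
  have c2 : (∑ k ∈ Finset.range (cH (n+1)),
      w ((chaconWord (n+2)).getD (cH (n+1) + k) 0) ((chaconWord (n+2)).getD (cH (n+1) + k + 1) 0))
      = pairSum (n+1) w + w 0 1 := by
    have hsr : (∑ k ∈ Finset.range (cH (n+1)),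
        w ((chaconWord (n+2)).getD (cH (n+1) + k) 0) ((chaconWord (n+2)).getD (cH (n+1) + k + 1) 0))
        = (∑ k ∈ Finset.range m,
            w ((chaconWord (n+2)).getD (cH (n+1) + k) 0)
              ((chaconWord (n+2)).getD (cH (n+1) + k + 1) 0))
          + w ((chaconWord (n+2)).getD (cH (n+1) + m) 0)
              ((chaconWord (n+2)).getD (cH (n+1) + m + 1) 0) := by
      rw [hm]; exact Finset.sum_range_succ _ m
    rw [hsr, hps]
    have e : ∀ k ∈ Finset.range m,
        w ((chaconWord (n+2)).getD (cH (n+1) + k) 0) ((chaconWord (n+2)).getD (cH (n+1) + k + 1) 0)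
        = w ((chaconWord (n+1)).getD k 0) ((chaconWord (n+1)).getD (k+1) 0) := by
      intro k hk
      have hk' := Finset.mem_range.mp hk
      rw [gA2 (n := n+1) (by omega), show cH (n+1) + k + 1 = cH (n+1) + (k+1) from by omega,
        gA2 (n := n+1) (by omega)]
    rw [Finset.sum_congr rfl e]
    rw [gA2 (n := n+1) hmlt, hlast,
      show cH (n+1) + m + 1 = 2 * cH (n+1) from by omega, gAs (n+1)]
    omega
  -- middle spacer
  have cm : w ((chaconWord (n+2)).getD (2 * cH (n+1)) 0)
      ((chaconWord (n+2)).getD (2 * cH (n+1) + 1) 0) = w 1 0 := by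
    rw [gAs (n+1), show 2 * cH (n+1) + 1 = 2 * cH (n+1) + 1 + 0 from by omega,
      gA3 (n := n+1) (cH_pos (n+1)), A_first]
  -- copy 3
  have c3 : (∑ k ∈ Finset.range (cH (n+1)),
      w ((chaconWord (n+2)).getD (2*cH (n+1)+1 + k) 0)
        ((chaconWord (n+2)).getD (2*cH (n+1)+1 + k + 1) 0))
      = pairSum (n+1) w := by
    have hsr : (∑ k ∈ Finset.range (cH (n+1)),
        w ((chaconWord (n+2)).getD (2*cH (n+1)+1 + k) 0)
          ((chaconWord (n+2)).getD (2*cH (n+1)+1 + k + 1) 0))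
        = (∑ k ∈ Finset.range m,
            w ((chaconWord (n+2)).getD (2*cH (n+1)+1 + k) 0)
              ((chaconWord (n+2)).getD (2*cH (n+1)+1 + k + 1) 0))
          + w ((chaconWord (n+2)).getD (2*cH (n+1)+1 + m) 0)
              ((chaconWord (n+2)).getD (2*cH (n+1)+1 + m + 1) 0) := by
      rw [hm]; exact Finset.sum_range_succ _ m
    rw [hsr, hps]
    congr 1
    · apply Finset.sum_congr rfl
      intro k hk
      have hk' := Finset.mem_range.mp hk
      rw [gA3 (n := n+1) (by omega),
        show 2*cH (n+1)+1+k+1 = 2*cH (n+1)+1+(k+1) from by omega,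
        gA3 (n := n+1) (by omega)]
    · rw [gA3 (n := n+1) hmlt, hlast,
        show 2*cH (n+1)+1+m+1 = cH (n+2) from by rw [cH_succ (n+1)]; omega,
        List.getD_eq_default _ _ (by rw [len_eq])]
      exact h00
  simp only [c1, c2, cm, c3]
  omega

def w01 : Fin 2 → Fin 2 → ℕ := fun a b => if a = 0 ∧ b = 1 then 1 else 0
def w10 : Fin 2 → Fin 2 → ℕ := fun a b => if a = 1 ∧ b = 0 then 1 else 0

lemma pair_ge (n : ℕ) : cH n ≤ pairSum (n+1) w01 ∧ cH n ≤ pairSum (n+1) w10 := by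
  induction n with
  | zero =>
      constructor <;>
      · rw [pairSum, show cH 1 = 4 from by rw [cH_succ, cH_zero],
          show chaconWord 1 = [0,0,1,0] from by simp [chaconWord], cH_zero]
        decide
  | succ n ih =>
      obtain ⟨ih01, ih10⟩ := ih
      have h01 := pairSum_step n w01 (by simp [w01])
      have h10 := pairSum_step n w10 (by simp [w10])
      have e01 : w01 0 1 = 1 := by simp [w01]
      have e10 : w10 1 0 = 1 := by simp [w10]
      have hs := cH_succ n
      rw [show (n:ℕ)+1+1 = n+2 from rfl]
      omega

lemma A_last' {n m : ℕ} (hm : cH n = m + 1) : (chaconWord n).getD m 0 = 0 := by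
  have := A_last n; rwa [show cH n - 1 = m from by omega] at this

/-- the sequence of lower bounds: `ep n = (3^(n+1)+3)/6`. -/
def ep : ℕ → ℕ
  | 0 => 1
  | n + 1 => 3 * ep n - 1

lemma ep_pos (n : ℕ) : 1 ≤ ep n := by
  induction n with
  | zero => simp [ep]
  | succ n ih => rw [ep]; omega

lemma ep_cH (n : ℕ) : ep (n+1) = cH n + 1 := by
  induction n with
  | zero => rw [ep, cH_zero]; rfl
  | succ n ih =>
      have h1 := ep_pos (n+1)
      have h2 := cH_succ n
      rw [show ep (n+2) = 3 * ep (n+1) - 1 from rfl]; omega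

lemma ep6 (n : ℕ) : 6 * ep n = 3^(n+1) + 3 := by
  induction n with
  | zero => simp [ep]
  | succ n ih =>
      have h1 := ep_pos n
      rw [show ep (n+1) = 3 * ep n - 1 from rfl, pow_succ]
      omega

lemma cH_pow (n : ℕ) : 2 * cH n + 1 = 3^(n+1) := by
  induction n with
  | zero => rw [cH_zero]; rfl
  | succ n ih => rw [cH_succ, pow_succ]; omega

lemma helperD (a b : Fin 2) :
    w01 a b + w10 a b ≤ (if a ≠ b then 1 else 0) := by
  fin_cases a <;> fin_cases b <;> simp [w01, w10]

/-- spacer-start comparison: `W_{n+1}` against `1 :: W_{n+1} ...`. -/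
lemma spE (n : ℕ) (z : List (Fin 2)) :
    cH n + 1 ≤ cntE (n+1) ((1:Fin 2) :: (chaconWord (n+1) ++ z)) := by
  have hpos := cH_pos (n+1)
  obtain ⟨m, hm⟩ : ∃ m, cH (n+1) = m + 1 := ⟨cH (n+1) - 1, by omega⟩
  have hlast := A_last' hm
  set Y := (1:Fin 2) :: (chaconWord (n+1) ++ z) with hY
  have hsplit : cntE (n+1) Y
      = (∑ k ∈ Finset.range m,
          (if (chaconWord (n+1)).getD (k+1) 0 = 0 ∧ Y.getD (k+1) 0 = 1 then 1 else 0))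
        + (if (chaconWord (n+1)).getD 0 0 = 0 ∧ Y.getD 0 0 = 1 then 1 else 0) := by
    rw [cntE, hm]; exact Finset.sum_range_succ' _ m
  have t0 : (if (chaconWord (n+1)).getD 0 0 = 0 ∧ Y.getD 0 0 = 1 then 1 else 0) = 1 := by
    rw [A_first, hY, List.getD_cons_zero]; simp
  have tk : ∀ k ∈ Finset.range m,
      w10 ((chaconWord (n+1)).getD k 0) ((chaconWord (n+1)).getD (k+1) 0)
      ≤ (if (chaconWord (n+1)).getD (k+1) 0 = 0 ∧ Y.getD (k+1) 0 = 1 then 1 else 0) := by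
    intro k hk
    have hk' := Finset.mem_range.mp hk
    rw [hY, List.getD_cons_succ, List.getD_append _ _ _ _ (by rw [len_eq]; omega)]
    simp only [w10]
    exact le_of_eq (if_congr and_comm rfl rfl)
  have hsum := Finset.sum_le_sum tk
  have hps : pairSum (n+1) w10
      = (∑ k ∈ Finset.range m,
          w10 ((chaconWord (n+1)).getD k 0) ((chaconWord (n+1)).getD (k+1) 0)) + 0 := by
    rw [pairSum, hm, Finset.sum_range_succ]
    congr 1
    rw [hlast]; exact (by decide : ∀ b : Fin 2, w10 0 b = 0) _
  have := (pair_ge n).2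
  omega

lemma spD (n : ℕ) (z : List (Fin 2)) :
    2 * cH n + 1 ≤ cntD (n+1) ((1:Fin 2) :: (chaconWord (n+1) ++ z)) := by
  have hpos := cH_pos (n+1)
  obtain ⟨m, hm⟩ : ∃ m, cH (n+1) = m + 1 := ⟨cH (n+1) - 1, by omega⟩
  have hlast := A_last' hm
  set Y := (1:Fin 2) :: (chaconWord (n+1) ++ z) with hY
  have hsplit : cntD (n+1) Y
      = (∑ k ∈ Finset.range m,
          (if (chaconWord (n+1)).getD (k+1) 0 ≠ Y.getD (k+1) 0 then 1 else 0))
        + (if (chaconWord (n+1)).getD 0 0 ≠ Y.getD 0 0 then 1 else 0) := by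
    rw [cntD, hm]; exact Finset.sum_range_succ' _ m
  have t0 : (if (chaconWord (n+1)).getD 0 0 ≠ Y.getD 0 0 then 1 else 0) = 1 := by
    rw [A_first, hY, List.getD_cons_zero]; simp
  have tk : ∀ k ∈ Finset.range m,
      w01 ((chaconWord (n+1)).getD k 0) ((chaconWord (n+1)).getD (k+1) 0)
        + w10 ((chaconWord (n+1)).getD k 0) ((chaconWord (n+1)).getD (k+1) 0)
      ≤ (if (chaconWord (n+1)).getD (k+1) 0 ≠ Y.getD (k+1) 0 then 1 else 0) := by
    intro k hk
    have hk' := Finset.mem_range.mp hk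
    rw [hY, List.getD_cons_succ, List.getD_append _ _ _ _ (by rw [len_eq]; omega)]
    have := helperD ((chaconWord (n+1)).getD k 0) ((chaconWord (n+1)).getD (k+1) 0)
    refine le_trans this ?_
    have : ∀ a b : Fin 2, (if a ≠ b then (1:ℕ) else 0) = (if b ≠ a then 1 else 0) := by decide
    rw [this]
  have hsum := Finset.sum_le_sum tk
  rw [Finset.sum_add_distrib] at hsum
  have hps01 : pairSum (n+1) w01
      = (∑ k ∈ Finset.range m,
          w01 ((chaconWord (n+1)).getD k 0) ((chaconWord (n+1)).getD (k+1) 0)) + 0 := by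
    rw [pairSum, hm, Finset.sum_range_succ]
    congr 1
    rw [hlast, A_getD_len (n+1) (by omega)]; decide
  have hps10 : pairSum (n+1) w10
      = (∑ k ∈ Finset.range m,
          w10 ((chaconWord (n+1)).getD k 0) ((chaconWord (n+1)).getD (k+1) 0)) + 0 := by
    rw [pairSum, hm, Finset.sum_range_succ]
    congr 1
    rw [hlast]; exact (by decide : ∀ b : Fin 2, w10 0 b = 0) _
  have hp := pair_ge n
  omega

/-- offset-1-then-spacer comparison: `W_{n+1}` against `W_{n+1}.drop 1 ++ 1 :: ...`. -/
lemma offE (n : ℕ) (z : List (Fin 2)) :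
    cH n + 1 ≤ cntE (n+1) ((chaconWord (n+1)).drop 1 ++ ((1:Fin 2) :: z)) := by
  have hpos := cH_pos (n+1)
  obtain ⟨m, hm⟩ : ∃ m, cH (n+1) = m + 1 := ⟨cH (n+1) - 1, by omega⟩
  have hlast := A_last' hm
  set Y := (chaconWord (n+1)).drop 1 ++ ((1:Fin 2) :: z) with hY
  have hlen : ((chaconWord (n+1)).drop 1).length = m := by
    rw [List.length_drop, len_eq]; omega
  have hsplit : cntE (n+1) Y
      = (∑ k ∈ Finset.range m,
          (if (chaconWord (n+1)).getD k 0 = 0 ∧ Y.getD k 0 = 1 then 1 else 0))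
        + (if (chaconWord (n+1)).getD m 0 = 0 ∧ Y.getD m 0 = 1 then 1 else 0) := by
    rw [cntE, hm]; exact Finset.sum_range_succ _ m
  have tm : (if (chaconWord (n+1)).getD m 0 = 0 ∧ Y.getD m 0 = 1 then 1 else 0) = 1 := by
    rw [hlast, hY, List.getD_append_right _ _ _ _ (by omega), hlen]
    simp
  have tk : ∀ k ∈ Finset.range m,
      w01 ((chaconWord (n+1)).getD k 0) ((chaconWord (n+1)).getD (k+1) 0)
      ≤ (if (chaconWord (n+1)).getD k 0 = 0 ∧ Y.getD k 0 = 1 then 1 else 0) := by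
    intro k hk
    have hk' := Finset.mem_range.mp hk
    rw [hY, List.getD_append _ _ _ _ (by omega), getD_dropL,
      show 1 + k = k + 1 from by omega]
    simp only [w01]
    exact le_rfl
  have hsum := Finset.sum_le_sum tk
  have hps : pairSum (n+1) w01
      = (∑ k ∈ Finset.range m,
          w01 ((chaconWord (n+1)).getD k 0) ((chaconWord (n+1)).getD (k+1) 0)) + 0 := by
    rw [pairSum, hm, Finset.sum_range_succ]
    congr 1
    rw [hlast, A_getD_len (n+1) (by omega)]; decide
  have := (pair_ge n).1
  omega

lemma offD (n : ℕ) (z : List (Fin 2)) :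
    2 * cH n + 1 ≤ cntD (n+1) ((chaconWord (n+1)).drop 1 ++ ((1:Fin 2) :: z)) := by
  have hpos := cH_pos (n+1)
  obtain ⟨m, hm⟩ : ∃ m, cH (n+1) = m + 1 := ⟨cH (n+1) - 1, by omega⟩
  have hlast := A_last' hm
  set Y := (chaconWord (n+1)).drop 1 ++ ((1:Fin 2) :: z) with hY
  have hlen : ((chaconWord (n+1)).drop 1).length = m := by
    rw [List.length_drop, len_eq]; omega
  have hsplit : cntD (n+1) Y
      = (∑ k ∈ Finset.range m,
          (if (chaconWord (n+1)).getD k 0 ≠ Y.getD k 0 then 1 else 0))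
        + (if (chaconWord (n+1)).getD m 0 ≠ Y.getD m 0 then 1 else 0) := by
    rw [cntD, hm]; exact Finset.sum_range_succ _ m
  have tm : (if (chaconWord (n+1)).getD m 0 ≠ Y.getD m 0 then 1 else 0) = 1 := by
    rw [hlast, hY, List.getD_append_right _ _ _ _ (by omega), hlen]
    simp
  have tk : ∀ k ∈ Finset.range m,
      w01 ((chaconWord (n+1)).getD k 0) ((chaconWord (n+1)).getD (k+1) 0)
        + w10 ((chaconWord (n+1)).getD k 0) ((chaconWord (n+1)).getD (k+1) 0)
      ≤ (if (chaconWord (n+1)).getD k 0 ≠ Y.getD k 0 then 1 else 0) := by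
    intro k hk
    have hk' := Finset.mem_range.mp hk
    rw [hY, List.getD_append _ _ _ _ (by omega), getD_dropL,
      show 1 + k = k + 1 from by omega]
    exact helperD _ _
  have hsum := Finset.sum_le_sum tk
  rw [Finset.sum_add_distrib] at hsum
  have hps01 : pairSum (n+1) w01
      = (∑ k ∈ Finset.range m,
          w01 ((chaconWord (n+1)).getD k 0) ((chaconWord (n+1)).getD (k+1) 0)) + 0 := by
    rw [pairSum, hm, Finset.sum_range_succ]
    congr 1
    rw [hlast, A_getD_len (n+1) (by omega)]; decide
  have hps10 : pairSum (n+1) w10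
      = (∑ k ∈ Finset.range m,
          w10 ((chaconWord (n+1)).getD k 0) ((chaconWord (n+1)).getD (k+1) 0)) + 0 := by
    rw [pairSum, hm, Finset.sum_range_succ]
    congr 1
    rw [hlast]; exact (by decide : ∀ b : Fin 2, w10 0 b = 0) _
  have hp := pair_ge n
  omega

/-- number of zeros of `chaconWord n`. -/
def cnt0 (n : ℕ) : ℕ :=
  ∑ k ∈ Finset.range (cH n), (if (chaconWord n).getD k 0 = 0 then 1 else 0)

lemma cnt0_le (n : ℕ) : cnt0 n ≤ 3^n := by
  induction n with
  | zero => rw [cnt0, cH_zero]; simp [chaconWord]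
  | succ n ih =>
      rw [cnt0, show (n:ℕ)+1 = n+1 from rfl, sum_split n]
      have c1 : (∑ k ∈ Finset.range (cH n),
          (if (chaconWord (n+1)).getD k 0 = 0 then 1 else 0)) = cnt0 n := by
        apply Finset.sum_congr rfl; intro k hk
        rw [gA1 (Finset.mem_range.mp hk)]
      have c2 : (∑ k ∈ Finset.range (cH n),
          (if (chaconWord (n+1)).getD (cH n + k) 0 = 0 then 1 else 0)) = cnt0 n := by
        apply Finset.sum_congr rfl; intro k hk
        rw [gA2 (Finset.mem_range.mp hk)]
      have c3 : (∑ k ∈ Finset.range (cH n),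
          (if (chaconWord (n+1)).getD (2*cH n+1 + k) 0 = 0 then 1 else 0)) = cnt0 n := by
        apply Finset.sum_congr rfl; intro k hk
        rw [gA3 (Finset.mem_range.mp hk)]
      have cm : (if (chaconWord (n+1)).getD (2*cH n) 0 = 0 then 1 else 0) = 0 := by
        rw [gAs]; simp
      rw [c1, c2, c3, cm, pow_succ]
      omega

lemma cnt0_pos (n : ℕ) : 0 < cnt0 n := by
  have h1 : (1:ℕ) ≤ cnt0 n := by
    rw [cnt0]
    calc (1:ℕ) = (if (chaconWord n).getD 0 0 = 0 then 1 else 0) := by rw [A_first]; simp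
    _ ≤ _ := Finset.single_le_sum
        (f := fun k => if (chaconWord n).getD k 0 = 0 then (1:ℕ) else 0)
        (fun i _ => Nat.zero_le _) (Finset.mem_range.mpr (cH_pos n))
  omega

lemma peelA (n : ℕ) (b : List (Fin 2)) (k : ℕ) :
    ((chaconWord n ++ b).drop (cH n + k)) = b.drop k := by
  rw [← len_eq]; simp [List.drop_append]

lemma peelA0 (n : ℕ) (b : List (Fin 2)) : ((chaconWord n ++ b).drop (cH n)) = b := by
  have := peelA n b 0
  simpa using this

lemma peelLt (n : ℕ) (b : List (Fin 2)) {r : ℕ} (hr : r ≤ cH n) :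
    (chaconWord n ++ b).drop r = (chaconWord n).drop r ++ b :=
  List.drop_append_of_le_length (by rw [len_eq]; exact hr)

lemma peel1 (b : List (Fin 2)) (k : ℕ) : (((1:Fin 2) :: b).drop (k+1)) = b.drop k := by simp

lemma cntE_prefix (n : ℕ) (X z : List (Fin 2)) (h : cH n ≤ X.length) :
    cntE n (X ++ z) = cntE n X := by
  unfold cntE
  apply Finset.sum_congr rfl
  intro k hk
  rw [List.getD_append _ _ _ _ (by have := Finset.mem_range.mp hk; omega)]

lemma cntD_prefix (n : ℕ) (X z : List (Fin 2)) (h : cH n ≤ X.length) :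
    cntD n (X ++ z) = cntD n X := by
  unfold cntD
  apply Finset.sum_congr rfl
  intro k hk
  rw [List.getD_append _ _ _ _ (by have := Finset.mem_range.mp hk; omega)]

theorem envOK : ∀ n r (c z : List (Fin 2)), (c = [] ∨ c = [(1:Fin 2)]) → 0 < r →
    r < cH (n+1) →
    ep n ≤ cntE (n+1) ((chaconWord (n+1)).drop r ++ (c ++ (chaconWord (n+1) ++ z)))
    ∧ 2 * ep n - 1 ≤ cntD (n+1) ((chaconWord (n+1)).drop r ++ (c ++ (chaconWord (n+1) ++ z))) := by
  intro n
  induction n with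
  | zero =>
      intro r c z hc hr0 hrlt
      have hr4 : r < 4 := by rw [cH_succ, cH_zero] at hrlt; omega
      have ha : ∀ (a b w : List (Fin 2)), a ++ (b ++ (w ++ z)) = (a ++ (b ++ w)) ++ z := by
        intros; simp [List.append_assoc]
      rcases hc with rfl | rfl <;> interval_cases r <;> refine ⟨?_, ?_⟩ <;>
        rw [ha] <;>
        first
          | (rw [cntE_prefix (0+1) _ z (by decide)]; decide)
          | (rw [cntD_prefix (0+1) _ z (by decide)]; decide)
  | succ n ih =>
      intro r c z hc hr0 hrlt
      have hpos := cH_pos (n+1)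
      have hr3 : r < 3 * cH (n+1) + 1 := by rw [cH_succ] at hrlt; omega
      have hepA : ep (n+1) = 3 * ep n - 1 := rfl
      have hepB := ep_pos n
      have hepC : ep (n+1) = cH n + 1 := ep_cH n
      have hS : (chaconWord (n+2)).drop r ++ (c ++ (chaconWord (n+2) ++ z))
          = ((chaconWord (n+1) ++ (chaconWord (n+1) ++ ((1:Fin 2) :: (chaconWord (n+1) ++ (c ++ (chaconWord (n+1) ++ (chaconWord (n+1) ++ ((1:Fin 2) :: (chaconWord (n+1) ++ z)))))))))).drop r := by
        rw [← List.drop_append_of_le_length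
          (show r ≤ (chaconWord (n+2)).length from by rw [len_eq, cH_succ]; omega)]
        rw [show chaconWord (n+2)
          = chaconWord (n+1) ++ (chaconWord (n+1) ++ ((1:Fin 2) :: chaconWord (n+1)))
          from cA_succ (n+1)]
        simp only [List.append_assoc, List.cons_append]
      rw [show (n:ℕ)+1+1 = n+2 from rfl]
      rw [hS]
      have keyE := cntE_le3 (n+1) (((chaconWord (n+1) ++ (chaconWord (n+1) ++ ((1:Fin 2) :: (chaconWord (n+1) ++ (c ++ (chaconWord (n+1) ++ (chaconWord (n+1) ++ ((1:Fin 2) :: (chaconWord (n+1) ++ z)))))))))).drop r)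
      have keyD := cntD_le3 (n+1) (((chaconWord (n+1) ++ (chaconWord (n+1) ++ ((1:Fin 2) :: (chaconWord (n+1) ++ (c ++ (chaconWord (n+1) ++ (chaconWord (n+1) ++ ((1:Fin 2) :: (chaconWord (n+1) ++ z)))))))))).drop r)
      rw [show (n:ℕ)+1+1 = n+2 from rfl, List.drop_drop, List.drop_drop] at keyE keyD
      have ihE0 : ∀ ρ z', 0 < ρ → ρ < cH (n+1) →
          ep n ≤ cntE (n+1) ((chaconWord (n+1)).drop ρ ++ (chaconWord (n+1) ++ z')) := by
        intro ρ z' h1 h2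
        have := (ih ρ [] z' (Or.inl rfl) h1 h2).1
        simpa using this
      have ihD0 : ∀ ρ z', 0 < ρ → ρ < cH (n+1) →
          2 * ep n - 1 ≤ cntD (n+1) ((chaconWord (n+1)).drop ρ ++ (chaconWord (n+1) ++ z')) := by
        intro ρ z' h1 h2
        have := (ih ρ [] z' (Or.inl rfl) h1 h2).2
        simpa using this
      have ihE1 : ∀ ρ z', 0 < ρ → ρ < cH (n+1) →
          ep n ≤ cntE (n+1)
            ((chaconWord (n+1)).drop ρ ++ ((1:Fin 2) :: (chaconWord (n+1) ++ z'))) := by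
        intro ρ z' h1 h2
        have := (ih ρ [(1:Fin 2)] z' (Or.inr rfl) h1 h2).1
        simpa using this
      have ihD1 : ∀ ρ z', 0 < ρ → ρ < cH (n+1) →
          2 * ep n - 1 ≤ cntD (n+1)
            ((chaconWord (n+1)).drop ρ ++ ((1:Fin 2) :: (chaconWord (n+1) ++ z'))) := by
        intro ρ z' h1 h2
        have := (ih ρ [(1:Fin 2)] z' (Or.inr rfl) h1 h2).2
        simpa using this
      rcases Nat.lt_or_ge r (cH (n+1)) with hcase | hcase
      · -- 0 < r < h
        have d0 : ((chaconWord (n+1) ++ (chaconWord (n+1) ++ ((1:Fin 2) :: (chaconWord (n+1) ++ (c ++ (chaconWord (n+1) ++ (chaconWord (n+1) ++ ((1:Fin 2) :: (chaconWord (n+1) ++ z)))))))))).drop r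
            = (chaconWord (n+1)).drop r ++ (chaconWord (n+1) ++ ((1:Fin 2) :: (chaconWord (n+1) ++ (c ++ (chaconWord (n+1) ++ (chaconWord (n+1) ++ ((1:Fin 2) :: (chaconWord (n+1) ++ z)))))))) :=
          peelLt _ _ (le_of_lt hcase)
        have d1 : ((chaconWord (n+1) ++ (chaconWord (n+1) ++ ((1:Fin 2) :: (chaconWord (n+1) ++ (c ++ (chaconWord (n+1) ++ (chaconWord (n+1) ++ ((1:Fin 2) :: (chaconWord (n+1) ++ z)))))))))).drop (r + cH (n+1))
            = (chaconWord (n+1)).drop r ++ ((1:Fin 2) :: (chaconWord (n+1) ++ (c ++ (chaconWord (n+1) ++ (chaconWord (n+1) ++ ((1:Fin 2) :: (chaconWord (n+1) ++ z))))))) := by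
          rw [show r + cH (n+1) = cH (n+1) + r from by omega, peelA,
            peelLt _ _ (le_of_lt hcase)]
        have d2 : ((chaconWord (n+1) ++ (chaconWord (n+1) ++ ((1:Fin 2) :: (chaconWord (n+1) ++ (c ++ (chaconWord (n+1) ++ (chaconWord (n+1) ++ ((1:Fin 2) :: (chaconWord (n+1) ++ z)))))))))).drop (r + (2 * cH (n+1) + 1))
            = (chaconWord (n+1)).drop r ++ (c ++ (chaconWord (n+1) ++ (chaconWord (n+1) ++ ((1:Fin 2) :: (chaconWord (n+1) ++ z))))) := by
          rw [show r + (2 * cH (n+1) + 1) = cH (n+1) + (cH (n+1) + (r + 1)) from by omega,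
            peelA, peelA, peel1, peelLt _ _ (le_of_lt hcase)]
        simp only [d0, d1, d2] at keyE keyD ⊢
        have e0 := ihE0 r ((1:Fin 2) :: (chaconWord (n+1) ++ (c ++ (chaconWord (n+1) ++ (chaconWord (n+1) ++ ((1:Fin 2) :: (chaconWord (n+1) ++ z))))))) hr0 hcase
        have e1 := ihE1 r (c ++ (chaconWord (n+1) ++ (chaconWord (n+1) ++ ((1:Fin 2) :: (chaconWord (n+1) ++ z))))) hr0 hcase
        have e2 := (ih r c (chaconWord (n+1) ++ ((1:Fin 2) :: (chaconWord (n+1) ++ z))) hc hr0 hcase).1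
        have f0 := ihD0 r ((1:Fin 2) :: (chaconWord (n+1) ++ (c ++ (chaconWord (n+1) ++ (chaconWord (n+1) ++ ((1:Fin 2) :: (chaconWord (n+1) ++ z))))))) hr0 hcase
        have f1 := ihD1 r (c ++ (chaconWord (n+1) ++ (chaconWord (n+1) ++ ((1:Fin 2) :: (chaconWord (n+1) ++ z))))) hr0 hcase
        have f2 := (ih r c (chaconWord (n+1) ++ ((1:Fin 2) :: (chaconWord (n+1) ++ z))) hc hr0 hcase).2
        constructor <;> omega
      rcases Nat.eq_or_lt_of_le hcase with hcase2 | hcase2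
      · -- r = h
        subst hcase2
        have d1 : ((chaconWord (n+1) ++ (chaconWord (n+1) ++ ((1:Fin 2) :: (chaconWord (n+1) ++ (c ++ (chaconWord (n+1) ++ (chaconWord (n+1) ++ ((1:Fin 2) :: (chaconWord (n+1) ++ z)))))))))).drop (cH (n+1) + cH (n+1))
            = (1:Fin 2) :: (chaconWord (n+1) ++ (c ++ (chaconWord (n+1) ++ (chaconWord (n+1) ++ ((1:Fin 2) :: (chaconWord (n+1) ++ z)))))) := by
          rw [peelA, peelA0]
        simp only [d1] at keyE keyD
        have e1 := spE n (c ++ (chaconWord (n+1) ++ (chaconWord (n+1) ++ ((1:Fin 2) :: (chaconWord (n+1) ++ z)))))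
        have f1 := spD n (c ++ (chaconWord (n+1) ++ (chaconWord (n+1) ++ ((1:Fin 2) :: (chaconWord (n+1) ++ z)))))
        constructor <;> omega
      rcases Nat.lt_or_ge r (2 * cH (n+1)) with hcase3 | hcase3
      · -- h < r < 2h
        obtain ⟨ρ, rfl⟩ : ∃ ρ, r = cH (n+1) + ρ := ⟨r - cH (n+1), by omega⟩
        have hρ1 : 1 ≤ ρ := by omega
        have hρh : ρ < cH (n+1) := by omega
        rcases Nat.eq_or_lt_of_le hρ1 with hρρ | hρ2
        · -- ρ = 1 : offset-1 at piece 0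
          have d0 : ((chaconWord (n+1) ++ (chaconWord (n+1) ++ ((1:Fin 2) :: (chaconWord (n+1) ++ (c ++ (chaconWord (n+1) ++ (chaconWord (n+1) ++ ((1:Fin 2) :: (chaconWord (n+1) ++ z)))))))))).drop (cH (n+1) + ρ)
              = (chaconWord (n+1)).drop 1 ++ ((1:Fin 2) :: (chaconWord (n+1) ++ (c ++ (chaconWord (n+1) ++ (chaconWord (n+1) ++ ((1:Fin 2) :: (chaconWord (n+1) ++ z))))))) := by
            rw [peelA, ← hρρ, peelLt _ _ (show 1 ≤ cH (n+1) from hpos)]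
          simp only [d0] at keyE keyD ⊢
          have e0 := offE n (chaconWord (n+1) ++ (c ++ (chaconWord (n+1) ++ (chaconWord (n+1) ++ ((1:Fin 2) :: (chaconWord (n+1) ++ z))))))
          have f0 := offD n (chaconWord (n+1) ++ (c ++ (chaconWord (n+1) ++ (chaconWord (n+1) ++ ((1:Fin 2) :: (chaconWord (n+1) ++ z))))))
          constructor <;> omega
        · -- 2 ≤ ρ < h
          obtain ⟨σ, rfl⟩ : ∃ σ, ρ = σ + 1 := ⟨ρ - 1, by omega⟩
          have hσ1 : 1 ≤ σ := by omega
          have hσh : σ < cH (n+1) := by omega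
          have d0 : ((chaconWord (n+1) ++ (chaconWord (n+1) ++ ((1:Fin 2) :: (chaconWord (n+1) ++ (c ++ (chaconWord (n+1) ++ (chaconWord (n+1) ++ ((1:Fin 2) :: (chaconWord (n+1) ++ z)))))))))).drop (cH (n+1) + (σ+1))
              = (chaconWord (n+1)).drop (σ+1) ++ ((1:Fin 2) :: (chaconWord (n+1) ++ (c ++ (chaconWord (n+1) ++ (chaconWord (n+1) ++ ((1:Fin 2) :: (chaconWord (n+1) ++ z))))))) := by
            rw [peelA, peelLt _ _ (le_of_lt hρh)]
          have d1 : ((chaconWord (n+1) ++ (chaconWord (n+1) ++ ((1:Fin 2) :: (chaconWord (n+1) ++ (c ++ (chaconWord (n+1) ++ (chaconWord (n+1) ++ ((1:Fin 2) :: (chaconWord (n+1) ++ z)))))))))).drop (cH (n+1) + (σ+1) + cH (n+1))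
              = (chaconWord (n+1)).drop σ ++ (c ++ (chaconWord (n+1) ++ (chaconWord (n+1) ++ ((1:Fin 2) :: (chaconWord (n+1) ++ z))))) := by
            rw [show cH (n+1) + (σ+1) + cH (n+1) = cH (n+1) + (cH (n+1) + (σ + 1))
              from by omega, peelA, peelA, peel1, peelLt _ _ (le_of_lt hσh)]
          have d2 : ((chaconWord (n+1) ++ (chaconWord (n+1) ++ ((1:Fin 2) :: (chaconWord (n+1) ++ (c ++ (chaconWord (n+1) ++ (chaconWord (n+1) ++ ((1:Fin 2) :: (chaconWord (n+1) ++ z)))))))))).drop (cH (n+1) + (σ+1) + (2 * cH (n+1) + 1))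
              = (c ++ (chaconWord (n+1) ++ (chaconWord (n+1) ++ ((1:Fin 2) :: (chaconWord (n+1) ++ z))))).drop (σ+1) := by
            rw [show cH (n+1) + (σ+1) + (2 * cH (n+1) + 1)
              = cH (n+1) + (cH (n+1) + ((cH (n+1) + (σ+1)) + 1)) from by omega,
              peelA, peelA, peel1, peelA]
          simp only [d0, d1, d2] at keyE keyD ⊢
          have e0 := ihE1 (σ+1) (c ++ (chaconWord (n+1) ++ (chaconWord (n+1) ++ ((1:Fin 2) :: (chaconWord (n+1) ++ z))))) (by omega) hρh
          have f0 := ihD1 (σ+1) (c ++ (chaconWord (n+1) ++ (chaconWord (n+1) ++ ((1:Fin 2) :: (chaconWord (n+1) ++ z))))) (by omega) hρh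
          have e1 := (ih σ c (chaconWord (n+1) ++ ((1:Fin 2) :: (chaconWord (n+1) ++ z))) hc hσ1 hσh).1
          have f1 := (ih σ c (chaconWord (n+1) ++ ((1:Fin 2) :: (chaconWord (n+1) ++ z))) hc hσ1 hσh).2
          rcases hc with rfl | rfl
          · have d2' : ((([] : List (Fin 2))) ++ (chaconWord (n+1) ++ (chaconWord (n+1) ++ ((1:Fin 2) :: (chaconWord (n+1) ++ z))))).drop (σ+1)
                = (chaconWord (n+1)).drop (σ+1) ++ (chaconWord (n+1) ++ ((1:Fin 2) :: (chaconWord (n+1) ++ z))) := by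
              rw [List.nil_append, peelLt _ _ (le_of_lt hρh)]
            simp only [d2'] at keyE keyD
            have e2 := ihE0 (σ+1) ((1:Fin 2) :: (chaconWord (n+1) ++ z)) (by omega) hρh
            have f2 := ihD0 (σ+1) ((1:Fin 2) :: (chaconWord (n+1) ++ z)) (by omega) hρh
            constructor <;> omega
          · have d2' : (([(1:Fin 2)]) ++ (chaconWord (n+1) ++ (chaconWord (n+1) ++ ((1:Fin 2) :: (chaconWord (n+1) ++ z))))).drop (σ+1)
                = (chaconWord (n+1)).drop σ ++ (chaconWord (n+1) ++ ((1:Fin 2) :: (chaconWord (n+1) ++ z))) := by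
              rw [List.singleton_append, peel1, peelLt _ _ (le_of_lt hσh)]
            simp only [d2'] at keyE keyD
            have e2 := ihE0 σ ((1:Fin 2) :: (chaconWord (n+1) ++ z)) hσ1 hσh
            have f2 := ihD0 σ ((1:Fin 2) :: (chaconWord (n+1) ++ z)) hσ1 hσh
            constructor <;> omega
      rcases Nat.eq_or_lt_of_le hcase3 with hcase4 | hcase4
      · -- r = 2h
        subst hcase4
        have d0 : ((chaconWord (n+1) ++ (chaconWord (n+1) ++ ((1:Fin 2) :: (chaconWord (n+1) ++ (c ++ (chaconWord (n+1) ++ (chaconWord (n+1) ++ ((1:Fin 2) :: (chaconWord (n+1) ++ z)))))))))).drop (2 * cH (n+1))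
            = (1:Fin 2) :: (chaconWord (n+1) ++ (c ++ (chaconWord (n+1) ++ (chaconWord (n+1) ++ ((1:Fin 2) :: (chaconWord (n+1) ++ z)))))) := by
          rw [show 2 * cH (n+1) = cH (n+1) + cH (n+1) from by omega, peelA, peelA0]
        simp only [d0] at keyE keyD ⊢
        have e0 := spE n (c ++ (chaconWord (n+1) ++ (chaconWord (n+1) ++ ((1:Fin 2) :: (chaconWord (n+1) ++ z)))))
        have f0 := spD n (c ++ (chaconWord (n+1) ++ (chaconWord (n+1) ++ ((1:Fin 2) :: (chaconWord (n+1) ++ z)))))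
        constructor <;> omega
      rcases Nat.eq_or_lt_of_le (show 2 * cH (n+1) + 1 ≤ r from hcase4) with hcase5 | hcase5
      · -- r = 2h + 1
        subst hcase5
        rcases hc with rfl | rfl
        · -- c = [] : offset-1 at piece 2
          have d2 : ((chaconWord (n+1) ++ (chaconWord (n+1) ++ ((1:Fin 2) :: (chaconWord (n+1) ++ (([] : List (Fin 2)) ++ (chaconWord (n+1) ++ (chaconWord (n+1) ++ ((1:Fin 2) :: (chaconWord (n+1) ++ z)))))))))).drop (2 * cH (n+1) + 1 + (2 * cH (n+1) + 1))
              = (chaconWord (n+1)).drop 1 ++ ((1:Fin 2) :: (chaconWord (n+1) ++ z)) := by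
            rw [show 2 * cH (n+1) + 1 + (2 * cH (n+1) + 1)
                = cH (n+1) + (cH (n+1) + ((2 * cH (n+1) + 1) + 1)) from by omega,
              peelA, peelA, peel1, List.nil_append,
              show 2 * cH (n+1) + 1 = cH (n+1) + (cH (n+1) + 1) from by omega,
              peelA, peelA, peelLt _ _ (show 1 ≤ cH (n+1) from hpos)]
          simp only [d2] at keyE keyD
          have e2 := offE n (chaconWord (n+1) ++ z)
          have f2 := offD n (chaconWord (n+1) ++ z)
          constructor <;> omega
        · -- c = [1] : spacer at piece 1
          have d1 : ((chaconWord (n+1) ++ (chaconWord (n+1) ++ ((1:Fin 2) :: (chaconWord (n+1) ++ ([(1:Fin 2)] ++ (chaconWord (n+1) ++ (chaconWord (n+1) ++ ((1:Fin 2) :: (chaconWord (n+1) ++ z)))))))))).drop (2 * cH (n+1) + 1 + cH (n+1))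
              = (1:Fin 2) :: (chaconWord (n+1) ++ (chaconWord (n+1) ++ ((1:Fin 2) :: (chaconWord (n+1) ++ z)))) := by
            rw [show 2 * cH (n+1) + 1 + cH (n+1)
                = cH (n+1) + (cH (n+1) + (cH (n+1) + 1)) from by omega,
              peelA, peelA, peel1, peelA0, List.singleton_append]
          simp only [d1] at keyE keyD
          have e1 := spE n (chaconWord (n+1) ++ ((1:Fin 2) :: (chaconWord (n+1) ++ z)))
          have f1 := spD n (chaconWord (n+1) ++ ((1:Fin 2) :: (chaconWord (n+1) ++ z)))
          constructor <;> omega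
      · -- r = 2h + 1 + ρ, 1 ≤ ρ < h
        obtain ⟨ρ, rfl⟩ : ∃ ρ, r = 2 * cH (n+1) + 1 + ρ := ⟨r - (2*cH (n+1) + 1), by omega⟩
        have hρ1 : 1 ≤ ρ := by omega
        have hρh : ρ < cH (n+1) := by omega
        rcases hc with rfl | rfl
        · -- c = []
          have dT : ∀ k, ((chaconWord (n+1) ++ (chaconWord (n+1) ++ ((1:Fin 2) :: (chaconWord (n+1) ++ (([] : List (Fin 2)) ++ (chaconWord (n+1) ++ (chaconWord (n+1) ++ ((1:Fin 2) :: (chaconWord (n+1) ++ z)))))))))).drop (2 * cH (n+1) + 1 + k)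
              = (chaconWord (n+1) ++ (chaconWord (n+1) ++ (chaconWord (n+1) ++ ((1:Fin 2) :: (chaconWord (n+1) ++ z))))).drop k := by
            intro k
            rw [show 2 * cH (n+1) + 1 + k = cH (n+1) + (cH (n+1) + (k + 1)) from by omega,
              peelA, peelA, peel1, List.nil_append]
          have d0 : ((chaconWord (n+1) ++ (chaconWord (n+1) ++ ((1:Fin 2) :: (chaconWord (n+1) ++ (([] : List (Fin 2)) ++ (chaconWord (n+1) ++ (chaconWord (n+1) ++ ((1:Fin 2) :: (chaconWord (n+1) ++ z)))))))))).drop (2 * cH (n+1) + 1 + ρ)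
              = (chaconWord (n+1)).drop ρ ++ (chaconWord (n+1) ++ (chaconWord (n+1) ++ ((1:Fin 2) :: (chaconWord (n+1) ++ z)))) := by
            rw [dT, peelLt _ _ (le_of_lt hρh)]
          have d1 : ((chaconWord (n+1) ++ (chaconWord (n+1) ++ ((1:Fin 2) :: (chaconWord (n+1) ++ (([] : List (Fin 2)) ++ (chaconWord (n+1) ++ (chaconWord (n+1) ++ ((1:Fin 2) :: (chaconWord (n+1) ++ z)))))))))).drop (2 * cH (n+1) + 1 + ρ + cH (n+1))
              = (chaconWord (n+1)).drop ρ ++ (chaconWord (n+1) ++ ((1:Fin 2) :: (chaconWord (n+1) ++ z))) := by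
            rw [show 2 * cH (n+1) + 1 + ρ + cH (n+1)
                = 2 * cH (n+1) + 1 + (cH (n+1) + ρ) from by omega,
              dT, peelA, peelLt _ _ (le_of_lt hρh)]
          have e0 := ihE0 ρ (chaconWord (n+1) ++ ((1:Fin 2) :: (chaconWord (n+1) ++ z))) hρ1 hρh
          have f0 := ihD0 ρ (chaconWord (n+1) ++ ((1:Fin 2) :: (chaconWord (n+1) ++ z))) hρ1 hρh
          have e1 := ihE0 ρ ((1:Fin 2) :: (chaconWord (n+1) ++ z)) hρ1 hρh
          have f1 := ihD0 ρ ((1:Fin 2) :: (chaconWord (n+1) ++ z)) hρ1 hρh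
          rcases Nat.eq_or_lt_of_le (show ρ + 1 ≤ cH (n+1) from hρh) with hρe | hρlt
          · -- ρ + 1 = h : spacer at piece 2
            have d2 : ((chaconWord (n+1) ++ (chaconWord (n+1) ++ ((1:Fin 2) :: (chaconWord (n+1) ++ (([] : List (Fin 2)) ++ (chaconWord (n+1) ++ (chaconWord (n+1) ++ ((1:Fin 2) :: (chaconWord (n+1) ++ z)))))))))).drop (2 * cH (n+1) + 1 + ρ + (2 * cH (n+1) + 1))
                = (1:Fin 2) :: (chaconWord (n+1) ++ z) := by
              rw [show 2 * cH (n+1) + 1 + ρ + (2 * cH (n+1) + 1)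
                  = 2 * cH (n+1) + 1 + (cH (n+1) + (cH (n+1) + (ρ + 1))) from by omega,
                dT, peelA, peelA, hρe, peelA0]
            simp only [d0, d1, d2] at keyE keyD ⊢
            have e2 := spE n z
            have f2 := spD n z
            constructor <;> omega
          · -- ρ + 1 < h
            have d2 : ((chaconWord (n+1) ++ (chaconWord (n+1) ++ ((1:Fin 2) :: (chaconWord (n+1) ++ (([] : List (Fin 2)) ++ (chaconWord (n+1) ++ (chaconWord (n+1) ++ ((1:Fin 2) :: (chaconWord (n+1) ++ z)))))))))).drop (2 * cH (n+1) + 1 + ρ + (2 * cH (n+1) + 1))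
                = (chaconWord (n+1)).drop (ρ+1) ++ ((1:Fin 2) :: (chaconWord (n+1) ++ z)) := by
              rw [show 2 * cH (n+1) + 1 + ρ + (2 * cH (n+1) + 1)
                  = 2 * cH (n+1) + 1 + (cH (n+1) + (cH (n+1) + (ρ + 1))) from by omega,
                dT, peelA, peelA, peelLt _ _ (le_of_lt hρlt)]
            simp only [d0, d1, d2] at keyE keyD ⊢
            have e2 := ihE1 (ρ+1) z (by omega) hρlt
            have f2 := ihD1 (ρ+1) z (by omega) hρlt
            constructor <;> omega
        · -- c = [1]
          have dT : ∀ k, ((chaconWord (n+1) ++ (chaconWord (n+1) ++ ((1:Fin 2) :: (chaconWord (n+1) ++ ([(1:Fin 2)] ++ (chaconWord (n+1) ++ (chaconWord (n+1) ++ ((1:Fin 2) :: (chaconWord (n+1) ++ z)))))))))).drop (2 * cH (n+1) + 1 + k)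
              = (chaconWord (n+1) ++ ((1:Fin 2) :: (chaconWord (n+1) ++ (chaconWord (n+1) ++ ((1:Fin 2) :: (chaconWord (n+1) ++ z)))))).drop k := by
            intro k
            rw [show 2 * cH (n+1) + 1 + k = cH (n+1) + (cH (n+1) + (k + 1)) from by omega,
              peelA, peelA, peel1, List.singleton_append]
          rcases Nat.eq_or_lt_of_le hρ1 with hρρ | hρ2
          · -- ρ = 1 : offset-1 at piece 0
            have d0 : ((chaconWord (n+1) ++ (chaconWord (n+1) ++ ((1:Fin 2) :: (chaconWord (n+1) ++ ([(1:Fin 2)] ++ (chaconWord (n+1) ++ (chaconWord (n+1) ++ ((1:Fin 2) :: (chaconWord (n+1) ++ z)))))))))).drop (2 * cH (n+1) + 1 + ρ)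
                = (chaconWord (n+1)).drop 1 ++ ((1:Fin 2) :: (chaconWord (n+1) ++ (chaconWord (n+1) ++ ((1:Fin 2) :: (chaconWord (n+1) ++ z))))) := by
              rw [dT, ← hρρ, peelLt _ _ (show 1 ≤ cH (n+1) from hpos)]
            simp only [d0] at keyE keyD ⊢
            have e0 := offE n (chaconWord (n+1) ++ (chaconWord (n+1) ++ ((1:Fin 2) :: (chaconWord (n+1) ++ z))))
            have f0 := offD n (chaconWord (n+1) ++ (chaconWord (n+1) ++ ((1:Fin 2) :: (chaconWord (n+1) ++ z))))
            constructor <;> omega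
          · -- 2 ≤ ρ
            obtain ⟨σ, rfl⟩ : ∃ σ, ρ = σ + 1 := ⟨ρ - 1, by omega⟩
            have hσ1 : 1 ≤ σ := by omega
            have hσh : σ < cH (n+1) := by omega
            have d0 : ((chaconWord (n+1) ++ (chaconWord (n+1) ++ ((1:Fin 2) :: (chaconWord (n+1) ++ ([(1:Fin 2)] ++ (chaconWord (n+1) ++ (chaconWord (n+1) ++ ((1:Fin 2) :: (chaconWord (n+1) ++ z)))))))))).drop (2 * cH (n+1) + 1 + (σ+1))
                = (chaconWord (n+1)).drop (σ+1) ++ ((1:Fin 2) :: (chaconWord (n+1) ++ (chaconWord (n+1) ++ ((1:Fin 2) :: (chaconWord (n+1) ++ z))))) := by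
              rw [dT, peelLt _ _ (le_of_lt hρh)]
            have d1 : ((chaconWord (n+1) ++ (chaconWord (n+1) ++ ((1:Fin 2) :: (chaconWord (n+1) ++ ([(1:Fin 2)] ++ (chaconWord (n+1) ++ (chaconWord (n+1) ++ ((1:Fin 2) :: (chaconWord (n+1) ++ z)))))))))).drop (2 * cH (n+1) + 1 + (σ+1) + cH (n+1))
                = (chaconWord (n+1)).drop σ ++ (chaconWord (n+1) ++ ((1:Fin 2) :: (chaconWord (n+1) ++ z))) := by
              rw [show 2 * cH (n+1) + 1 + (σ+1) + cH (n+1)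
                  = 2 * cH (n+1) + 1 + (cH (n+1) + (σ+1)) from by omega,
                dT, peelA, peel1, peelLt _ _ (le_of_lt hσh)]
            have d2 : ((chaconWord (n+1) ++ (chaconWord (n+1) ++ ((1:Fin 2) :: (chaconWord (n+1) ++ ([(1:Fin 2)] ++ (chaconWord (n+1) ++ (chaconWord (n+1) ++ ((1:Fin 2) :: (chaconWord (n+1) ++ z)))))))))).drop (2 * cH (n+1) + 1 + (σ+1) + (2 * cH (n+1) + 1))
                = (chaconWord (n+1)).drop (σ+1) ++ ((1:Fin 2) :: (chaconWord (n+1) ++ z)) := by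
              rw [show 2 * cH (n+1) + 1 + (σ+1) + (2 * cH (n+1) + 1)
                  = 2 * cH (n+1) + 1 + (cH (n+1) + ((cH (n+1) + (σ+1)) + 1)) from by omega,
                dT, peelA, peel1, peelA, peelLt _ _ (le_of_lt hρh)]
            simp only [d0, d1, d2] at keyE keyD ⊢
            have e0 := ihE1 (σ+1) (chaconWord (n+1) ++ ((1:Fin 2) :: (chaconWord (n+1) ++ z))) (by omega) hρh
            have f0 := ihD1 (σ+1) (chaconWord (n+1) ++ ((1:Fin 2) :: (chaconWord (n+1) ++ z))) (by omega) hρh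
            have e1 := ihE0 σ ((1:Fin 2) :: (chaconWord (n+1) ++ z)) hσ1 hσh
            have f1 := ihD0 σ ((1:Fin 2) :: (chaconWord (n+1) ++ z)) hσ1 hσh
            have e2 := ihE1 (σ+1) z (by omega) hρh
            have f2 := ihD1 (σ+1) z (by omega) hρh
            constructor <;> omega

end ChaconAux

/-- `W` is the infinite word having every `Wₙ` as an initial segment. -/
def IsChaconInfWord (W : ℕ → Fin 2) : Prop :=
  ∀ n i, i < (chaconWord n).length → W i = (chaconWord n).getD i 0

/-- A finite word `α` occurs in a finite word `β` at position `j`. -/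
def OccursAt (α β : List (Fin 2)) (j : ℕ) : Prop :=
  j + α.length ≤ β.length ∧ ∀ k < α.length, β.getD (j + k) 0 = α.getD k 0

/-- A finite word `α` occurs in the infinite word `W` at position `j`. -/
def OccursAtInf (W : ℕ → Fin 2) (α : List (Fin 2)) (j : ℕ) : Prop :=
  ∀ k < α.length, W (j + k) = α.getD k 0

/-- The subword of the infinite word `W` of length `L` beginning at position `i`. -/
def subword (W : ℕ → Fin 2) (i L : ℕ) : List (Fin 2) :=
  (List.range L).map fun k => W (i + k)

/-- The (normalized) Hamming distance `d` of two finite words. -/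
noncomputable def hamming (α β : List (Fin 2)) : ℝ :=
  (((Finset.range α.length).filter fun i => α.getD i 0 ≠ β.getD i 0).card : ℝ) / α.length

/-- The modified 0-Hamming distance `d₀` of two finite words. -/
noncomputable def hamming0 (α β : List (Fin 2)) : ℝ :=
  (((Finset.range α.length).filter fun i => α.getD i 0 = 0 ∧ β.getD i 0 = 1).card : ℝ) /
    (((Finset.range α.length).filter fun i => α.getD i 0 = 0).card : ℝ)

open ChaconAux in
theorem chacon_shift_lower_bound (W : ℕ → Fin 2) (hW : IsChaconInfWord W) (n i : ℕ)
    (hi0 : 0 < i) (hin : i < (chaconWord n).length) :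
    hamming0 (chaconWord n) (subword W i (chaconWord n).length) > 1 / 6 ∧
      hamming (chaconWord n) (subword W i (chaconWord n).length) > 2 / 9 := by
  obtain (rfl | ⟨m, rfl⟩) : n = 0 ∨ ∃ m, n = m + 1 := by
    cases n with
    | zero => exact Or.inl rfl
    | succ m => exact Or.inr ⟨m, rfl⟩
  · exfalso
    simp [chaconWord] at hin
    omega
  have hin' : i < cH (m+1) := by rwa [len_eq] at hin
  set Y := (chaconWord (m+2)).drop i with hY
  set β := subword W i (chaconWord (m+1)).length with hβdef
  -- pointwise identification of the subword with Y
  have hβ : ∀ k, k < cH (m+1) → β.getD k 0 = Y.getD k 0 := by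
    intro k hk
    have h1 : β.getD k 0 = W (i + k) := by
      rw [hβdef, subword, List.getD_eq_getElem?_getD, List.getElem?_map,
        List.getElem?_range (by rw [len_eq]; exact hk)]
      rfl
    have h2 : i + k < (chaconWord (m+2)).length := by
      rw [len_eq, cH_succ]; omega
    rw [h1, hW (m+2) (i+k) h2, hY, getD_dropL]
  -- identify the three cardinalities
  have hnumE : (((Finset.range (chaconWord (m+1)).length).filter
      fun k => (chaconWord (m+1)).getD k 0 = 0 ∧ β.getD k 0 = 1).card) = cntE (m+1) Y := by
    rw [Finset.card_filter, len_eq, cntE]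
    apply Finset.sum_congr rfl
    intro k hk
    rw [hβ k (Finset.mem_range.mp hk)]
  have hnumD : (((Finset.range (chaconWord (m+1)).length).filter
      fun k => (chaconWord (m+1)).getD k 0 ≠ β.getD k 0).card) = cntD (m+1) Y := by
    rw [Finset.card_filter, len_eq, cntD]
    apply Finset.sum_congr rfl
    intro k hk
    rw [hβ k (Finset.mem_range.mp hk)]
  have hden0 : (((Finset.range (chaconWord (m+1)).length).filter
      fun k => (chaconWord (m+1)).getD k 0 = 0).card) = cnt0 (m+1) := by
    rw [Finset.card_filter, len_eq, cnt0]
  -- the counting bounds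
  have hYenv : Y = (chaconWord (m+1)).drop i
      ++ (chaconWord (m+1) ++ ((1:Fin 2) :: chaconWord (m+1))) := by
    rw [hY, show chaconWord (m+2)
        = chaconWord (m+1) ++ (chaconWord (m+1) ++ ((1:Fin 2) :: chaconWord (m+1)))
        from cA_succ (m+1),
      peelLt _ _ (le_of_lt hin')]
  have hEb : ep m ≤ cntE (m+1) Y := by
    rw [hYenv]
    have := (envOK m i [] ((1:Fin 2) :: chaconWord (m+1)) (Or.inl rfl) hi0 hin').1
    simpa using this
  have hDb : 2 * ep m - 1 ≤ cntD (m+1) Y := by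
    rw [hYenv]
    have := (envOK m i [] ((1:Fin 2) :: chaconWord (m+1)) (Or.inl rfl) hi0 hin').2
    simpa using this
  -- numeric conclusions
  have h6 := ep6 m
  have hz := cnt0_le (m+1)
  have hzpos := cnt0_pos (m+1)
  have hpow := cH_pow (m+1)
  have hpow2 : (3:ℕ)^(m+2) = 3 * 3^(m+1) := by ring
  have hEnat : cnt0 (m+1) < 6 * cntE (m+1) Y := by omega
  have hDnat : 2 * cH (m+1) < 9 * cntD (m+1) Y := by
    have h1 := ep_pos m
    omega
  constructor
  · rw [hamming0, hnumE, hden0, gt_iff_lt, div_lt_div_iff₀ (by norm_num)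
      (by exact_mod_cast hzpos)]
    calc (1:ℝ) * (cnt0 (m+1) : ℝ) = (cnt0 (m+1) : ℝ) := by ring
    _ < ((6 * cntE (m+1) Y : ℕ) : ℝ) := by exact_mod_cast hEnat
    _ = (cntE (m+1) Y : ℝ) * 6 := by push_cast; ring
  · rw [hamming, hnumD, gt_iff_lt, div_lt_div_iff₀ (by norm_num)
      (by rw [len_eq]; exact_mod_cast cH_pos (m+1))]
    rw [len_eq]
    calc (2:ℝ) * (cH (m+1) : ℝ) = ((2 * cH (m+1) : ℕ) : ℝ) := by push_cast; ring
    _ < ((9 * cntD (m+1) Y : ℕ) : ℝ) := by exact_mod_cast hDnat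
    _ = (cntD (m+1) Y : ℝ) * 9 := by push_cast; ring
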